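/- Let (Ω, ℱ, P) be a probability space. Let X : Ω → ℝ be a random variable whose law is the uniform distribution on [−1, 1], let a : Ω → {−1, 1} be a random variable with P(a = 1) = P(a = −1) = 1/2, and let π : Ω → {1, 2} be a random variable. Assume that a is independent of the pair (π, X). Then E[max(a·X, 0) − 𝟙{π = 2}·a·X] ≥ 1/16. -/

import Mathlib

open MeasureTheory
open scoped ENNReal

/-- Per-round regret bound of Theorem 5.5: with `X` uniform on `[−1, 1]`, `a` a Rademacher
sign, and a decision `π ∈ {1, 2}` such that `a` is independent of `(π, X)`, the expected
instantaneous regret `E[max(aX, 0) − 1{π = 2}·aX]` is at least `1/16`. -/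
theorem stmt15 {Ω : Type*} [MeasurableSpace Ω] (P : Measure Ω) [IsProbabilityMeasure P]
    (X a : Ω → ℝ) (π : Ω → ℕ)
    (hX : Measurable X) (ha : Measurable a) (hπ : Measurable π)
    (hXlaw : Measure.map X P = (2 : ℝ≥0∞)⁻¹ • volume.restrict (Set.Icc (-1 : ℝ) 1))
    (haval : ∀ ω, a ω = 1 ∨ a ω = -1)
    (ha1 : P {ω | a ω = 1} = 1/2) (haneg : P {ω | a ω = -1} = 1/2)
    (hπval : ∀ ω, π ω = 1 ∨ π ω = 2)
    (hindep : ProbabilityTheory.IndepFun a (fun ω => (π ω, X ω)) P) :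
    (1 : ℝ)/16 ≤ ∫ ω, (max (a ω * X ω) 0 - (if π ω = 2 then a ω * X ω else 0)) ∂P := by
  -- |a ω| = 1
  have habs : ∀ ω, |a ω| = 1 := by
    intro ω; rcases haval ω with h | h <;> simp [h]
  -- a.e. bound |X| ≤ 1
  have hXae : ∀ᵐ ω ∂P, |X ω| ≤ 1 := by
    have h1 : P (X ⁻¹' Set.Icc (-1 : ℝ) 1) = 1 := by
      have := Measure.map_apply (μ := P) hX (measurableSet_Icc (a := (-1:ℝ)) (b := 1))
      rw [hXlaw] at this
      rw [← this]
      simp [Real.volume_Icc]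
      norm_num
      rw [show ((2:ℝ≥0∞))⁻¹ * 2 = 1 by
        rw [ENNReal.inv_mul_cancel] <;> norm_num]
    have hc : P (X ⁻¹' Set.Icc (-1 : ℝ) 1)ᶜ = 0 := by
      rw [measure_compl (hX measurableSet_Icc) (by simp), h1]; simp
    have hae : ∀ᵐ ω ∂P, ω ∈ X ⁻¹' Set.Icc (-1 : ℝ) 1 := by
      rw [ae_iff]; exact hc
    filter_upwards [hae] with ω h
    exact abs_le.mpr h
  -- the decision indicator times X
  set Y : Ω → ℝ := fun ω => if π ω = 2 then X ω else 0 with hYdef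
  have hYmeas : Measurable Y :=
    Measurable.ite (hπ (measurableSet_singleton 2)) hX measurable_const
  -- integrability facts
  have inta : Integrable a P := by
    refine Integrable.mono' (integrable_const 1) ha.aestronglyMeasurable ?_
    exact Filter.Eventually.of_forall fun ω => by rw [Real.norm_eq_abs, habs]
  have intX : Integrable X P := by
    refine Integrable.mono' (integrable_const 1) hX.aestronglyMeasurable ?_
    filter_upwards [hXae] with ω h; rwa [Real.norm_eq_abs]
  have intAbsX : Integrable (fun ω => |X ω|) P := by
    refine Integrable.mono' (integrable_const 1) hX.abs.aestronglyMeasurable ?_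
    filter_upwards [hXae] with ω h; rwa [Real.norm_eq_abs, abs_abs]
  have intY : Integrable Y P := by
    refine Integrable.mono' (integrable_const 1) hYmeas.aestronglyMeasurable ?_
    filter_upwards [hXae] with ω h
    by_cases hp : π ω = 2 <;> simp [hYdef, hp, Real.norm_eq_abs, h]
  have intAX : Integrable (fun ω => a ω * X ω) P := by
    refine Integrable.mono' (integrable_const 1) ((ha.mul hX).aestronglyMeasurable) ?_
    filter_upwards [hXae] with ω h
    rw [Real.norm_eq_abs, abs_mul, habs, one_mul]; exact h
  have intAY : Integrable (fun ω => a ω * Y ω) P := by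
    refine Integrable.mono' (integrable_const 1) ((ha.mul hYmeas).aestronglyMeasurable) ?_
    filter_upwards [hXae] with ω h
    rw [Real.norm_eq_abs, abs_mul, habs, one_mul]
    by_cases hp : π ω = 2 <;> simp [hYdef, hp, h]
  -- E[a] = 0
  have hA : MeasurableSet {ω | a ω = 1} := ha (measurableSet_singleton 1)
  have hEa : ∫ ω, a ω ∂P = 0 := by
    have heq : (fun ω => a ω)
        = fun ω => ({ω | a ω = 1}.indicator (fun _ => (2:ℝ)) ω) - 1 := by
      funext ω
      rcases haval ω with h | h <;> norm_num [Set.indicator_apply, h]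
    rw [heq, integral_sub ((integrable_const (2:ℝ)).indicator hA) (integrable_const 1),
      integral_indicator_const _ hA, measureReal_def, ha1, integral_const]
    simp [ENNReal.toReal_div]
  -- E[aX] = 0
  have hindX : ProbabilityTheory.IndepFun a X P := by
    have := hindep.comp measurable_id measurable_snd
    simpa [Function.comp_def] using this
  have hEaX : ∫ ω, a ω * X ω ∂P = 0 := by
    have h := hindX.integral_mul_eq_mul_integral inta.aestronglyMeasurable intX.aestronglyMeasurable
    rw [hEa, zero_mul] at h
    simpa [Pi.mul_apply] using h
  -- E[aY] = 0
  have hindY : ProbabilityTheory.IndepFun a Y P := by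
    have hg : Measurable (fun p : ℕ × ℝ => if p.1 = 2 then p.2 else 0) :=
      Measurable.ite (measurable_fst (measurableSet_singleton 2)) measurable_snd
        measurable_const
    have := hindep.comp measurable_id hg
    simpa [Function.comp_def, hYdef] using this
  have hEaY : ∫ ω, a ω * Y ω ∂P = 0 := by
    have h := hindY.integral_mul_eq_mul_integral inta.aestronglyMeasurable intY.aestronglyMeasurable
    rw [hEa, zero_mul] at h
    simpa [Pi.mul_apply] using h
  -- E[|X|] = 1/2
  have hEabsX : ∫ ω, |X ω| ∂P = 1/2 := by
    have hmap : ∫ ω, |X ω| ∂P = ∫ x, |x| ∂(Measure.map X P) :=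
      (integral_map hX.aemeasurable measurable_abs.aestronglyMeasurable).symm
    have hIcc : ∫ x in Set.Icc (-1:ℝ) 1, |x| = 1 := by
      rw [MeasureTheory.integral_Icc_eq_integral_Ioc,
        ← intervalIntegral.integral_of_le (by norm_num : (-1:ℝ) ≤ 1)]
      have hsplit := intervalIntegral.integral_add_adjacent_intervals
        (a := (-1:ℝ)) (b := 0) (c := 1) (f := fun x => |x|) (μ := volume)
        (continuous_abs.intervalIntegrable _ _) (continuous_abs.intervalIntegrable _ _)
      rw [← hsplit]
      have h1 : ∫ x in (-1:ℝ)..0, |x| = ∫ x in (-1:ℝ)..0, -x := by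
        refine intervalIntegral.integral_congr fun x hx => ?_
        rw [Set.uIcc_of_le (by norm_num : (-1:ℝ) ≤ 0)] at hx
        exact abs_of_nonpos hx.2
      have h2 : ∫ x in (0:ℝ)..1, |x| = ∫ x in (0:ℝ)..1, x := by
        refine intervalIntegral.integral_congr fun x hx => ?_
        rw [Set.uIcc_of_le (by norm_num : (0:ℝ) ≤ 1)] at hx
        exact abs_of_nonneg hx.1
      rw [h1, h2, intervalIntegral.integral_neg, integral_id, integral_id]
      norm_num
    rw [hmap, hXlaw, integral_smul_measure, hIcc]
    norm_num
  -- pointwise rewriting of the integrand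
  have key : ∀ ω, max (a ω * X ω) 0 - (if π ω = 2 then a ω * X ω else 0)
      = (a ω * X ω + |X ω|)/2 - a ω * Y ω := by
    intro ω
    have h1 : |a ω * X ω| = |X ω| := by rw [abs_mul, habs, one_mul]
    have h2 : max (a ω * X ω) 0 = (a ω * X ω + |a ω * X ω|)/2 := by
      rcases le_total 0 (a ω * X ω) with h | h
      · rw [abs_of_nonneg h, max_eq_left h]; ring
      · rw [abs_of_nonpos h, max_eq_right h]; ring
    rw [h2, h1]
    by_cases hp : π ω = 2 <;> simp [hYdef, hp]
  have hrw : ∫ ω, (max (a ω * X ω) 0 - (if π ω = 2 then a ω * X ω else 0)) ∂P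
      = ∫ ω, ((a ω * X ω + |X ω|)/2 - a ω * Y ω) ∂P :=
    integral_congr_ae (Filter.Eventually.of_forall key)
  have intSum : Integrable (fun ω => (a ω * X ω + |X ω|)/2) P := by
    exact (intAX.add intAbsX).div_const 2
  rw [hrw, integral_sub intSum intAY, hEaY, sub_zero]
  have : ∫ ω, (a ω * X ω + |X ω|)/2 ∂P = (∫ ω, (a ω * X ω + |X ω|) ∂P)/2 :=
    integral_div 2 _
  rw [this, integral_add intAX intAbsX, hEaX, hEabsX]
  norm_num
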